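/- Let (F,G) and (F₁,G₁) be generating pairs on an open set Ω ⊆ 𝔻 such that (F₁,G₁) is a successor of (F,G), i.e. a_(F₁,G₁) = a_(F,G) and b_(F₁,G₁) = −B_(F,G) on Ω. Let w : Ω → 𝔻 be continuously differentiable and satisfy the hyperbolic Vekua equation w_z̄ = a_(F,G)w + b_(F,G)w̄ on Ω, and suppose its (F,G)-derivative W = w_z − A_(F,G)w − B_(F,G)w̄ is continuously differentiable on Ω. Then W satisfies W_z̄ = a_(F₁,G₁)W + b_(F₁,G₁)W̄ on Ω, i.e. W is hyperbolic (F₁,G₁)-pseudoanalytic. -/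

import Mathlib

noncomputable section

open Filter Topology MeasureTheory

/-- Hyperbolic (duplex) numbers 𝔻, modeled as pairs `(Re z, Im z)` with `j ^ 2 = 1`. -/
abbrev Hyp : Type := ℝ × ℝ

/-- Real part of a hyperbolic number. -/
def hre (a : Hyp) : ℝ := a.1

/-- Imaginary part of a hyperbolic number. -/
def him (a : Hyp) : ℝ := a.2

/-- The hyperbolic imaginary unit `j`. -/
def hj : Hyp := (0, 1)

/-- Hyperbolic multiplication: `(x+tj)(x'+t'j) = (xx'+tt') + (xt'+tx')j`. -/
def hmul (a b : Hyp) : Hyp := (a.1 * b.1 + a.2 * b.2, a.1 * b.2 + a.2 * b.1)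

/-- Hyperbolic conjugation: `conj (x+tj) = x - tj`. -/
def hconj (a : Hyp) : Hyp := (a.1, -a.2)

/-- Invertibility of a hyperbolic number: `x² ≠ t²`. -/
def IsInv (a : Hyp) : Prop := a.1 ^ 2 ≠ a.2 ^ 2

/-- Hyperbolic inverse `z⁻¹ = z̄ / |z|²` with `|z|² = x² - t²`. -/
def hinv (a : Hyp) : Hyp := (a.1 / (a.1 ^ 2 - a.2 ^ 2), -a.2 / (a.1 ^ 2 - a.2 ^ 2))

/-- Hyperbolic division. -/
def hdiv (a b : Hyp) : Hyp := hmul a (hinv b)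

/-- Partial derivative in the first (`x`) variable. -/
def pdx (g : Hyp → ℝ) (p : Hyp) : ℝ := deriv (fun s => g (s, p.2)) p.1

/-- Partial derivative in the second (`t`) variable. -/
def pdt (g : Hyp → ℝ) (p : Hyp) : ℝ := deriv (fun s => g (p.1, s)) p.2

/-- The wave operator `□g = g_xx - g_tt`. -/
def waveOp (g : Hyp → ℝ) (p : Hyp) : ℝ := pdx (pdx g) p - pdt (pdt g) p

/-- `w_z = ½(∂_x + j ∂_t) w = ½((u_x+v_t) + (v_x+u_t)j)` for a 𝔻-valued `w = u + jv`. -/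
def dz (w : Hyp → Hyp) (p : Hyp) : Hyp :=
  ((pdx (fun q => (w q).1) p + pdt (fun q => (w q).2) p) / 2,
   (pdx (fun q => (w q).2) p + pdt (fun q => (w q).1) p) / 2)

/-- `w_z̄ = ½(∂_x - j ∂_t) w = ½((u_x-v_t) + (v_x-u_t)j)` for a 𝔻-valued `w = u + jv`. -/
def dzbar (w : Hyp → Hyp) (p : Hyp) : Hyp :=
  ((pdx (fun q => (w q).1) p - pdt (fun q => (w q).2) p) / 2,
   (pdx (fun q => (w q).2) p - pdt (fun q => (w q).1) p) / 2)

/-- `f_z = ½(f_x + j f_t)` for a real-valued `f`. -/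
def rz (f : Hyp → ℝ) (p : Hyp) : Hyp := (pdx f p / 2, pdt f p / 2)

/-- `f_z̄ = ½(f_x - j f_t)` for a real-valued `f`. -/
def rzbar (f : Hyp → ℝ) (p : Hyp) : Hyp := (pdx f p / 2, -(pdt f p) / 2)

/-- 𝔻-differentiability at `z₀`: the difference quotient `(f z - f z₀)·(z - z₀)⁻¹`
tends to `d` as `z → z₀` through points with `z - z₀` invertible. -/
def HasHDerivAt (f : Hyp → Hyp) (d : Hyp) (z₀ : Hyp) : Prop :=
  Filter.Tendsto (fun z => hmul (f z - f z₀) (hinv (z - z₀)))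
    (nhdsWithin z₀ {z | IsInv (z - z₀)}) (nhds d)

/-- `F Ḡ - F̄ G`. -/
def pairDenom (F G : Hyp → Hyp) (z : Hyp) : Hyp :=
  hmul (F z) (hconj (G z)) - hmul (hconj (F z)) (G z)

/-- Characteristic coefficient `a_(F,G) = -(F̄ G_z̄ - F_z̄ Ḡ)/(F Ḡ - F̄ G)`. -/
def aFG (F G : Hyp → Hyp) (z : Hyp) : Hyp :=
  - hdiv (hmul (hconj (F z)) (dzbar G z) - hmul (dzbar F z) (hconj (G z))) (pairDenom F G z)

/-- Characteristic coefficient `b_(F,G) = (F G_z̄ - F_z̄ G)/(F Ḡ - F̄ G)`. -/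
def bFG (F G : Hyp → Hyp) (z : Hyp) : Hyp :=
  hdiv (hmul (F z) (dzbar G z) - hmul (dzbar F z) (G z)) (pairDenom F G z)

/-- Characteristic coefficient `A_(F,G) = -(F̄ G_z - F_z Ḡ)/(F Ḡ - F̄ G)`. -/
def AFG (F G : Hyp → Hyp) (z : Hyp) : Hyp :=
  - hdiv (hmul (hconj (F z)) (dz G z) - hmul (dz F z) (hconj (G z))) (pairDenom F G z)

/-- Characteristic coefficient `B_(F,G) = (F G_z - F_z G)/(F Ḡ - F̄ G)`. -/
def BFG (F G : Hyp → Hyp) (z : Hyp) : Hyp :=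
  hdiv (hmul (F z) (dz G z) - hmul (dz F z) (G z)) (pairDenom F G z)

/-- A generating pair on `Ω`: twice continuously differentiable `F, G` with `Im(F̄G) ≠ 0`. -/
def IsGenPair (F G : Hyp → Hyp) (Ω : Set Hyp) : Prop :=
  ContDiffOn ℝ 2 F Ω ∧ ContDiffOn ℝ 2 G Ω ∧ ∀ z ∈ Ω, him (hmul (hconj (F z)) (G z)) ≠ 0

/-- The idempotent `e₁ = (1+j)/2`. -/
def e1 : Hyp := (1/2, 1/2)

/-- The idempotent `e₂ = (1-j)/2`. -/
def e2 : Hyp := (1/2, -1/2)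

/-- Contour integral `∮_{∂R} h dz` over the counterclockwise boundary of the rectangle
`[x₁,x₂] × [t₁,t₂]`, with hyperbolic multiplication (`dz = dx` on horizontal sides,
`dz = j dt` on vertical sides). -/
def rectContourInt (h : Hyp → Hyp) (x₁ x₂ t₁ t₂ : ℝ) : Hyp :=
  ((∫ x in x₁..x₂, h (x, t₁)) - ∫ x in x₁..x₂, h (x, t₂)) +
    hmul hj ((∫ t in t₁..t₂, h (x₂, t)) - ∫ t in t₁..t₂, h (x₁, t))

/-- Integral `∫_{[z₀,z]} h dζ` along the straight segment from `z₀` to `z`,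
with hyperbolic multiplication. -/
def segInt (h : Hyp → Hyp) (z₀ z : Hyp) : Hyp :=
  ∫ s in (0:ℝ)..1, hmul (h (z₀ + s • (z - z₀))) (z - z₀)

/-- Natural powers in 𝔻. -/
def hpow (a : Hyp) : ℕ → Hyp
  | 0 => (1, 0)
  | n + 1 => hmul a (hpow a n)

/-- Integer powers in 𝔻 (for invertible base). -/
def hzpow (a : Hyp) : ℤ → Hyp
  | Int.ofNat n => hpow a n
  | Int.negSucc n => hinv (hpow a (n + 1))

section Infra

open Filter

lemma sliceX {g : Hyp → ℝ} {p : Hyp} (h : DifferentiableAt ℝ g p) :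
    DifferentiableAt ℝ (fun s => g (s, p.2)) p.1 :=
  h.comp p.1 (differentiableAt_id.prodMk (differentiableAt_const _))

lemma sliceT {g : Hyp → ℝ} {p : Hyp} (h : DifferentiableAt ℝ g p) :
    DifferentiableAt ℝ (fun s => g (p.1, s)) p.2 :=
  h.comp p.2 ((differentiableAt_const _).prodMk differentiableAt_id)

lemma tendsto_sliceX (p : Hyp) :
    Tendsto (fun s : ℝ => ((s, p.2) : Hyp)) (nhds p.1) (nhds p) := by
  have : Continuous (fun s : ℝ => ((s, p.2) : Hyp)) := continuous_id.prodMk continuous_const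
  simpa using this.tendsto p.1

lemma tendsto_sliceT (p : Hyp) :
    Tendsto (fun s : ℝ => ((p.1, s) : Hyp)) (nhds p.2) (nhds p) := by
  have : Continuous (fun s : ℝ => ((p.1, s) : Hyp)) := continuous_const.prodMk continuous_id
  simpa using this.tendsto p.2

lemma pdx_congr {f g : Hyp → ℝ} {p : Hyp} (h : f =ᶠ[nhds p] g) : pdx f p = pdx g p := by
  apply Filter.EventuallyEq.deriv_eq
  exact (tendsto_sliceX p).eventually h

lemma pdt_congr {f g : Hyp → ℝ} {p : Hyp} (h : f =ᶠ[nhds p] g) : pdt f p = pdt g p := by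
  apply Filter.EventuallyEq.deriv_eq
  exact (tendsto_sliceT p).eventually h

lemma pdx_fderiv {g : Hyp → ℝ} {p : Hyp} (h : DifferentiableAt ℝ g p) :
    pdx g p = fderiv ℝ g p (1, 0) := by
  have h2 : HasDerivAt (fun s : ℝ => ((s, p.2) : Hyp)) ((1 : ℝ), (0 : ℝ)) p.1 :=
    (hasDerivAt_id p.1).prodMk (hasDerivAt_const p.1 p.2)
  have h3 : HasDerivAt (fun s => g (s, p.2)) (fderiv ℝ g p (1, 0)) p.1 :=
    h.hasFDerivAt.comp_hasDerivAt p.1 h2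
  exact h3.deriv

lemma pdt_fderiv {g : Hyp → ℝ} {p : Hyp} (h : DifferentiableAt ℝ g p) :
    pdt g p = fderiv ℝ g p (0, 1) := by
  have h2 : HasDerivAt (fun s : ℝ => ((p.1, s) : Hyp)) ((0 : ℝ), (1 : ℝ)) p.2 :=
    (hasDerivAt_const p.2 p.1).prodMk (hasDerivAt_id p.2)
  have h3 : HasDerivAt (fun s => g (p.1, s)) (fderiv ℝ g p (0, 1)) p.2 :=
    h.hasFDerivAt.comp_hasDerivAt p.2 h2
  exact h3.deriv

lemma pdx_add {f g : Hyp → ℝ} {p : Hyp} (hf : DifferentiableAt ℝ f p)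
    (hg : DifferentiableAt ℝ g p) :
    pdx (fun q => f q + g q) p = pdx f p + pdx g p :=
  deriv_add (sliceX hf) (sliceX hg)

lemma pdt_add {f g : Hyp → ℝ} {p : Hyp} (hf : DifferentiableAt ℝ f p)
    (hg : DifferentiableAt ℝ g p) :
    pdt (fun q => f q + g q) p = pdt f p + pdt g p :=
  deriv_add (sliceT hf) (sliceT hg)

lemma pdx_sub {f g : Hyp → ℝ} {p : Hyp} (hf : DifferentiableAt ℝ f p)
    (hg : DifferentiableAt ℝ g p) :
    pdx (fun q => f q - g q) p = pdx f p - pdx g p :=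
  deriv_sub (sliceX hf) (sliceX hg)

lemma pdt_sub {f g : Hyp → ℝ} {p : Hyp} (hf : DifferentiableAt ℝ f p)
    (hg : DifferentiableAt ℝ g p) :
    pdt (fun q => f q - g q) p = pdt f p - pdt g p :=
  deriv_sub (sliceT hf) (sliceT hg)

lemma pdx_mul {f g : Hyp → ℝ} {p : Hyp} (hf : DifferentiableAt ℝ f p)
    (hg : DifferentiableAt ℝ g p) :
    pdx (fun q => f q * g q) p = pdx f p * g p + f p * pdx g p := by
  have := deriv_fun_mul (sliceX hf) (sliceX hg)
  simpa [pdx] using this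

lemma pdt_mul {f g : Hyp → ℝ} {p : Hyp} (hf : DifferentiableAt ℝ f p)
    (hg : DifferentiableAt ℝ g p) :
    pdt (fun q => f q * g q) p = pdt f p * g p + f p * pdt g p := by
  have := deriv_fun_mul (sliceT hf) (sliceT hg)
  simpa [pdt] using this

lemma pdx_neg {f : Hyp → ℝ} {p : Hyp} : pdx (fun q => -f q) p = -pdx f p :=
  deriv.neg

lemma pdt_neg {f : Hyp → ℝ} {p : Hyp} : pdt (fun q => -f q) p = -pdt f p :=
  deriv.neg

lemma pdx_div_const {f : Hyp → ℝ} {p : Hyp} {c : ℝ} :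
    pdx (fun q => f q / c) p = pdx f p / c :=
  deriv_div_const c

lemma pdt_div_const {f : Hyp → ℝ} {p : Hyp} {c : ℝ} :
    pdt (fun q => f q / c) p = pdt f p / c :=
  deriv_div_const c

end Infra
section Infra2
open Filter

lemma vec_decomp (z : Hyp) : z.1 • ((1 : ℝ), (0 : ℝ)) + z.2 • ((0 : ℝ), (1 : ℝ)) = z := by
  ext <;> simp

/-- Schwarz symmetry of mixed partials. -/
lemma pdx_pdt_symm {u : Hyp → ℝ} {s : Set Hyp} {p : Hyp} (hs : IsOpen s) (hp : p ∈ s)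
    (hd : ∀ q ∈ s, DifferentiableAt ℝ u q)
    (hx : DifferentiableAt ℝ (pdx u) p) (ht : DifferentiableAt ℝ (pdt u) p) :
    pdx (pdt u) p = pdt (pdx u) p := by
  set fst : Hyp →L[ℝ] ℝ := ContinuousLinearMap.fst ℝ ℝ ℝ with hfst
  set snd : Hyp →L[ℝ] ℝ := ContinuousLinearMap.snd ℝ ℝ ℝ with hsnd
  set f' : Hyp → (Hyp →L[ℝ] ℝ) := fun q => pdx u q • fst + pdt u q • snd with hf'
  have hf'd : DifferentiableAt ℝ f' p := (hx.smul_const fst).add (ht.smul_const snd)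
  have key : ∀ᶠ q in nhds p, HasFDerivAt u (f' q) q := by
    filter_upwards [hs.mem_nhds hp] with q hq
    have h1 := (hd q hq).hasFDerivAt
    have he : f' q = fderiv ℝ u q := by
      apply ContinuousLinearMap.ext
      intro z
      have hz := vec_decomp z
      calc f' q z = pdx u q * z.1 + pdt u q * z.2 := by
            simp [hf', hfst, hsnd]
        _ = fderiv ℝ u q (z.1 • ((1:ℝ),(0:ℝ)) + z.2 • ((0:ℝ),(1:ℝ))) := by
            rw [map_add, (fderiv ℝ u q).map_smul, (fderiv ℝ u q).map_smul,
              ← pdx_fderiv (hd q hq), ← pdt_fderiv (hd q hq)]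
            simp [mul_comm]
        _ = fderiv ℝ u q z := by rw [hz]
    rw [he]; exact h1
  have hsymm := second_derivative_symmetric_of_eventually key hf'd.hasFDerivAt
    ((0:ℝ),(1:ℝ)) ((1:ℝ),(0:ℝ))
  have e1 : pdt u = fun q => f' q ((0:ℝ),(1:ℝ)) := by
    funext q; simp [hf', hfst, hsnd]
  have e2 : pdx u = fun q => f' q ((1:ℝ),(0:ℝ)) := by
    funext q; simp [hf', hfst, hsnd]
  have hder : ∀ v : Hyp, HasFDerivAt f' (fderiv ℝ f' p) p := fun _ => hf'd.hasFDerivAt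
  have c1 : pdx (pdt u) p = fderiv ℝ f' p ((1:ℝ),(0:ℝ)) ((0:ℝ),(1:ℝ)) := by
    rw [e1]
    show deriv (fun s => f' (s, p.2) ((0:ℝ),(1:ℝ))) p.1 = _
    have h2 : HasDerivAt (fun s : ℝ => ((s, p.2) : Hyp)) ((1 : ℝ), (0 : ℝ)) p.1 :=
      (hasDerivAt_id p.1).prodMk (hasDerivAt_const p.1 p.2)
    have h3 : HasDerivAt (fun s => f' (s, p.2)) (fderiv ℝ f' p ((1:ℝ),(0:ℝ))) p.1 :=
      hf'd.hasFDerivAt.comp_hasDerivAt p.1 h2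
    have h4 := h3.clm_apply (hasDerivAt_const p.1 ((0:ℝ),(1:ℝ)))
    simpa using h4.deriv
  have c2 : pdt (pdx u) p = fderiv ℝ f' p ((0:ℝ),(1:ℝ)) ((1:ℝ),(0:ℝ)) := by
    rw [e2]
    show deriv (fun s => f' (p.1, s) ((1:ℝ),(0:ℝ))) p.2 = _
    have h2 : HasDerivAt (fun s : ℝ => ((p.1, s) : Hyp)) ((0 : ℝ), (1 : ℝ)) p.2 :=
      (hasDerivAt_const p.2 p.1).prodMk (hasDerivAt_id p.2)
    have h3 : HasDerivAt (fun s => f' (p.1, s)) (fderiv ℝ f' p ((0:ℝ),(1:ℝ))) p.2 :=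
      hf'd.hasFDerivAt.comp_hasDerivAt p.2 h2
    have h4 := h3.clm_apply (hasDerivAt_const p.2 ((1:ℝ),(0:ℝ)))
    simpa using h4.deriv
  rw [c1, c2, hsymm]

/-- `pdx` of a `C²` function is differentiable. -/
lemma pdx_diffAt {g : Hyp → ℝ} {s : Set Hyp} {p : Hyp} (hs : IsOpen s) (hp : p ∈ s)
    (h : ContDiffOn ℝ 2 g s) : DifferentiableAt ℝ (pdx g) p := by
  have hat : ContDiffAt ℝ 2 g p := h.contDiffAt (hs.mem_nhds hp)
  have h1 : ContDiffAt ℝ 1 (fderiv ℝ g) p := hat.fderiv_right (by norm_num)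
  have h2 : DifferentiableAt ℝ (fun q => fderiv ℝ g q ((1:ℝ),(0:ℝ))) p :=
    (h1.differentiableAt one_ne_zero).clm_apply (differentiableAt_const _)
  have hev : pdx g =ᶠ[nhds p] fun q => fderiv ℝ g q ((1:ℝ),(0:ℝ)) := by
    filter_upwards [hs.mem_nhds hp] with q hq
    exact pdx_fderiv ((h.contDiffAt (hs.mem_nhds hq)).differentiableAt two_ne_zero)
  exact hev.differentiableAt_iff.mpr h2

lemma pdt_diffAt {g : Hyp → ℝ} {s : Set Hyp} {p : Hyp} (hs : IsOpen s) (hp : p ∈ s)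
    (h : ContDiffOn ℝ 2 g s) : DifferentiableAt ℝ (pdt g) p := by
  have hat : ContDiffAt ℝ 2 g p := h.contDiffAt (hs.mem_nhds hp)
  have h1 : ContDiffAt ℝ 1 (fderiv ℝ g) p := hat.fderiv_right (by norm_num)
  have h2 : DifferentiableAt ℝ (fun q => fderiv ℝ g q ((0:ℝ),(1:ℝ))) p :=
    (h1.differentiableAt one_ne_zero).clm_apply (differentiableAt_const _)
  have hev : pdt g =ᶠ[nhds p] fun q => fderiv ℝ g q ((0:ℝ),(1:ℝ)) := by
    filter_upwards [hs.mem_nhds hp] with q hq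
    exact pdt_fderiv ((h.contDiffAt (hs.mem_nhds hq)).differentiableAt two_ne_zero)
  exact hev.differentiableAt_iff.mpr h2

end Infra2
section Infra3
open Filter

lemma diffAt_hmul {f g : Hyp → Hyp} {p : Hyp} (hf : DifferentiableAt ℝ f p)
    (hg : DifferentiableAt ℝ g p) :
    DifferentiableAt ℝ (fun q => hmul (f q) (g q)) p := by
  unfold hmul
  exact ((hf.fst.mul hg.fst).add (hf.snd.mul hg.snd)).prodMk
    ((hf.fst.mul hg.snd).add (hf.snd.mul hg.fst))

lemma diffAt_hconj {f : Hyp → Hyp} {p : Hyp} (hf : DifferentiableAt ℝ f p) :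
    DifferentiableAt ℝ (fun q => hconj (f q)) p := by
  unfold hconj
  exact hf.fst.prodMk hf.snd.neg

lemma diffAt_hinv {f : Hyp → Hyp} {p : Hyp} (hf : DifferentiableAt ℝ f p)
    (hne : IsInv (f p)) :
    DifferentiableAt ℝ (fun q => hinv (f q)) p := by
  unfold hinv
  have hden : DifferentiableAt ℝ (fun q => (f q).1 ^ 2 - (f q).2 ^ 2) p :=
    (hf.fst.pow 2).sub (hf.snd.pow 2)
  have hne' : (f p).1 ^ 2 - (f p).2 ^ 2 ≠ 0 := sub_ne_zero.mpr hne
  simp only [div_eq_mul_inv]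
  exact (hf.fst.mul (hden.inv hne')).prodMk (hf.snd.neg.mul (hden.inv hne'))

lemma dzbar_congr {f g : Hyp → Hyp} {p : Hyp} (h : f =ᶠ[nhds p] g) :
    dzbar f p = dzbar g p := by
  have h1 : (fun q => (f q).1) =ᶠ[nhds p] (fun q => (g q).1) := h.mono (fun q hq => by simp only [hq])
  have h2 : (fun q => (f q).2) =ᶠ[nhds p] (fun q => (g q).2) := h.mono (fun q hq => by simp only [hq])
  unfold dzbar
  rw [pdx_congr h1, pdx_congr h2, pdt_congr h1, pdt_congr h2]

lemma dz_congr {f g : Hyp → Hyp} {p : Hyp} (h : f =ᶠ[nhds p] g) :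
    dz f p = dz g p := by
  have h1 : (fun q => (f q).1) =ᶠ[nhds p] (fun q => (g q).1) := h.mono (fun q hq => by simp only [hq])
  have h2 : (fun q => (f q).2) =ᶠ[nhds p] (fun q => (g q).2) := h.mono (fun q hq => by simp only [hq])
  unfold dz
  rw [pdx_congr h1, pdx_congr h2, pdt_congr h1, pdt_congr h2]

lemma dzbar_add {f g : Hyp → Hyp} {p : Hyp} (hf : DifferentiableAt ℝ f p)
    (hg : DifferentiableAt ℝ g p) :
    dzbar (fun q => f q + g q) p = dzbar f p + dzbar g p := by
  unfold dzbar
  simp only [Prod.fst_add, Prod.snd_add]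
  rw [pdx_add hf.fst hg.fst, pdx_add hf.snd hg.snd, pdt_add hf.fst hg.fst,
    pdt_add hf.snd hg.snd]
  rw [Prod.mk_add_mk]
  congr 1 <;> ring

lemma dz_add {f g : Hyp → Hyp} {p : Hyp} (hf : DifferentiableAt ℝ f p)
    (hg : DifferentiableAt ℝ g p) :
    dz (fun q => f q + g q) p = dz f p + dz g p := by
  unfold dz
  simp only [Prod.fst_add, Prod.snd_add]
  rw [pdx_add hf.fst hg.fst, pdx_add hf.snd hg.snd, pdt_add hf.fst hg.fst,
    pdt_add hf.snd hg.snd]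
  rw [Prod.mk_add_mk]
  congr 1 <;> ring

lemma dzbar_sub {f g : Hyp → Hyp} {p : Hyp} (hf : DifferentiableAt ℝ f p)
    (hg : DifferentiableAt ℝ g p) :
    dzbar (fun q => f q - g q) p = dzbar f p - dzbar g p := by
  unfold dzbar
  simp only [Prod.fst_sub, Prod.snd_sub]
  rw [pdx_sub hf.fst hg.fst, pdx_sub hf.snd hg.snd, pdt_sub hf.fst hg.fst,
    pdt_sub hf.snd hg.snd]
  rw [Prod.mk_sub_mk]
  congr 1 <;> ring

lemma dz_sub {f g : Hyp → Hyp} {p : Hyp} (hf : DifferentiableAt ℝ f p)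
    (hg : DifferentiableAt ℝ g p) :
    dz (fun q => f q - g q) p = dz f p - dz g p := by
  unfold dz
  simp only [Prod.fst_sub, Prod.snd_sub]
  rw [pdx_sub hf.fst hg.fst, pdx_sub hf.snd hg.snd, pdt_sub hf.fst hg.fst,
    pdt_sub hf.snd hg.snd]
  rw [Prod.mk_sub_mk]
  congr 1 <;> ring

lemma dzbar_hconj {f : Hyp → Hyp} {p : Hyp} :
    dzbar (fun q => hconj (f q)) p = hconj (dz f p) := by
  unfold dzbar dz hconj
  simp only
  rw [show (fun q => -(f q).2) = (fun q => -((fun r => (f r).2) q)) from rfl]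
  rw [pdx_neg, pdt_neg]
  congr 1 <;> ring

lemma dz_hconj {f : Hyp → Hyp} {p : Hyp} :
    dz (fun q => hconj (f q)) p = hconj (dzbar f p) := by
  unfold dzbar dz hconj
  simp only
  rw [show (fun q => -(f q).2) = (fun q => -((fun r => (f r).2) q)) from rfl]
  rw [pdx_neg, pdt_neg]
  congr 1 <;> ring

lemma dzbar_hmul {f g : Hyp → Hyp} {p : Hyp} (hf : DifferentiableAt ℝ f p)
    (hg : DifferentiableAt ℝ g p) :
    dzbar (fun q => hmul (f q) (g q)) p
      = hmul (dzbar f p) (g p) + hmul (f p) (dzbar g p) := by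
  unfold dzbar hmul
  simp only
  rw [pdx_add (hf.fst.fun_mul hg.fst) (hf.snd.fun_mul hg.snd),
    pdx_add (hf.fst.fun_mul hg.snd) (hf.snd.fun_mul hg.fst),
    pdt_add (hf.fst.fun_mul hg.fst) (hf.snd.fun_mul hg.snd),
    pdt_add (hf.fst.fun_mul hg.snd) (hf.snd.fun_mul hg.fst),
    pdx_mul hf.fst hg.fst, pdx_mul hf.snd hg.snd, pdx_mul hf.fst hg.snd,
    pdx_mul hf.snd hg.fst, pdt_mul hf.fst hg.fst, pdt_mul hf.snd hg.snd,
    pdt_mul hf.fst hg.snd, pdt_mul hf.snd hg.fst]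
  rw [Prod.mk_add_mk]
  congr 1 <;> ring

lemma dz_hmul {f g : Hyp → Hyp} {p : Hyp} (hf : DifferentiableAt ℝ f p)
    (hg : DifferentiableAt ℝ g p) :
    dz (fun q => hmul (f q) (g q)) p
      = hmul (dz f p) (g p) + hmul (f p) (dz g p) := by
  unfold dz hmul
  simp only
  rw [pdx_add (hf.fst.fun_mul hg.fst) (hf.snd.fun_mul hg.snd),
    pdx_add (hf.fst.fun_mul hg.snd) (hf.snd.fun_mul hg.fst),
    pdt_add (hf.fst.fun_mul hg.fst) (hf.snd.fun_mul hg.snd),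
    pdt_add (hf.fst.fun_mul hg.snd) (hf.snd.fun_mul hg.fst),
    pdx_mul hf.fst hg.fst, pdx_mul hf.snd hg.snd, pdx_mul hf.fst hg.snd,
    pdx_mul hf.snd hg.fst, pdt_mul hf.fst hg.fst, pdt_mul hf.snd hg.snd,
    pdt_mul hf.fst hg.snd, pdt_mul hf.snd hg.fst]
  rw [Prod.mk_add_mk]
  congr 1 <;> ring

end Infra3
section Infra4
open Filter

/-- Equality of mixed `dz`/`dzbar` derivatives. -/
lemma dzbar_dz_comm {f : Hyp → Hyp} {s : Set Hyp} {p : Hyp} (hs : IsOpen s) (hp : p ∈ s)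
    (hd : ∀ q ∈ s, DifferentiableAt ℝ f q)
    (hx1 : DifferentiableAt ℝ (pdx (fun q => (f q).1)) p)
    (ht1 : DifferentiableAt ℝ (pdt (fun q => (f q).1)) p)
    (hx2 : DifferentiableAt ℝ (pdx (fun q => (f q).2)) p)
    (ht2 : DifferentiableAt ℝ (pdt (fun q => (f q).2)) p) :
    dzbar (dz f) p = dz (dzbar f) p := by
  have hs1 := pdx_pdt_symm hs hp (fun q hq => (hd q hq).fst) hx1 ht1
  have hs2 := pdx_pdt_symm hs hp (fun q hq => (hd q hq).snd) hx2 ht2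
  unfold dzbar dz
  simp only
  simp only [pdx_div_const, pdt_div_const]
  rw [pdx_add hx1 ht2, pdx_add hx2 ht1, pdt_add hx1 ht2, pdt_add hx2 ht1,
    pdx_sub hx1 ht2, pdx_sub hx2 ht1, pdt_sub hx1 ht2, pdt_sub hx2 ht1]
  rw [Prod.mk.injEq]
  constructor
  · rw [hs2]; ring
  · rw [hs1]; ring

end Infra4
section Infra5
open Filter

lemma contDiffOn_fst2 {f : Hyp → Hyp} {s : Set Hyp} (h : ContDiffOn ℝ 2 f s) :
    ContDiffOn ℝ 2 (fun q => (f q).1) s := contDiff_fst.comp_contDiffOn h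

lemma contDiffOn_snd2 {f : Hyp → Hyp} {s : Set Hyp} (h : ContDiffOn ℝ 2 f s) :
    ContDiffOn ℝ 2 (fun q => (f q).2) s := contDiff_snd.comp_contDiffOn h

lemma diffAt_dz {f : Hyp → Hyp} {s : Set Hyp} {p : Hyp} (hs : IsOpen s) (hp : p ∈ s)
    (h : ContDiffOn ℝ 2 f s) : DifferentiableAt ℝ (dz f) p := by
  unfold dz
  have h1 := pdx_diffAt hs hp (contDiffOn_fst2 h)
  have h2 := pdx_diffAt hs hp (contDiffOn_snd2 h)
  have h3 := pdt_diffAt hs hp (contDiffOn_fst2 h)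
  have h4 := pdt_diffAt hs hp (contDiffOn_snd2 h)
  simp only [div_eq_mul_inv]
  exact (((h1.add h4).mul (differentiableAt_const _))).prodMk
    ((h2.add h3).mul (differentiableAt_const _))

lemma diffAt_dzbar {f : Hyp → Hyp} {s : Set Hyp} {p : Hyp} (hs : IsOpen s) (hp : p ∈ s)
    (h : ContDiffOn ℝ 2 f s) : DifferentiableAt ℝ (dzbar f) p := by
  unfold dzbar
  have h1 := pdx_diffAt hs hp (contDiffOn_fst2 h)
  have h2 := pdx_diffAt hs hp (contDiffOn_snd2 h)
  have h3 := pdt_diffAt hs hp (contDiffOn_fst2 h)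
  have h4 := pdt_diffAt hs hp (contDiffOn_snd2 h)
  simp only [div_eq_mul_inv]
  exact (((h1.sub h4).mul (differentiableAt_const _))).prodMk
    ((h2.sub h3).mul (differentiableAt_const _))

lemma isInv_pairDenom {Fv Gv : Hyp} (hne : him (hmul (hconj Fv) Gv) ≠ 0) :
    IsInv (hmul Fv (hconj Gv) - hmul (hconj Fv) Gv) := by
  simp only [hmul, hconj, him, IsInv] at *
  simp only [Prod.fst_sub, Prod.snd_sub]
  intro h
  apply hne
  have h2 : (Fv.1 * Gv.2 + -Fv.2 * Gv.1) ^ 2 = 0 := by linear_combination (-(1:ℝ)/4) * h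
  exact pow_eq_zero_iff (n := 2) (by norm_num) |>.mp h2

lemma hmul_hinv_self {d : Hyp} (hd : IsInv d) : hmul d (hinv d) = ((1 : ℝ), (0 : ℝ)) := by
  have hne : d.1 ^ 2 - d.2 ^ 2 ≠ 0 := sub_ne_zero.mpr hd
  simp only [hmul, hinv, Prod.mk.injEq]
  constructor
  · field_simp; ring
  · field_simp; ring

lemma eq_zero_of_hmul_eq_zero {α d : Hyp} (hd : IsInv d) (h : hmul α d = 0) : α = 0 := by
  have hne : d.1 ^ 2 - d.2 ^ 2 ≠ 0 := sub_ne_zero.mpr hd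
  have h1 : α.1 * d.1 + α.2 * d.2 = 0 := congrArg Prod.fst h
  have h2 : α.1 * d.2 + α.2 * d.1 = 0 := congrArg Prod.snd h
  have e1 : α.1 * (d.1 ^ 2 - d.2 ^ 2) = 0 := by linear_combination d.1 * h1 - d.2 * h2
  have e2 : α.2 * (d.1 ^ 2 - d.2 ^ 2) = 0 := by linear_combination d.1 * h2 - d.2 * h1
  have a1 : α.1 = 0 := by
    rcases mul_eq_zero.mp e1 with h | h
    · exact h
    · exact absurd h hne
  have a2 : α.2 = 0 := by
    rcases mul_eq_zero.mp e2 with h | h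
    · exact h
    · exact absurd h hne
  exact Prod.ext a1 a2

lemma hmul_comm (a b : Hyp) : hmul a b = hmul b a := by
  simp only [hmul, Prod.mk.injEq]; constructor <;> ring

lemma hmul_assoc (a b c : Hyp) : hmul (hmul a b) c = hmul a (hmul b c) := by
  simp only [hmul, Prod.mk.injEq]; constructor <;> ring

lemma hmul_one' (a : Hyp) : hmul a ((1 : ℝ), (0 : ℝ)) = a := by
  simp [hmul]

/-- Cramer identity for the first member of the pair. -/
lemma cramer1 (Fv Gv dF dG : Hyp) (hne : him (hmul (hconj Fv) Gv) ≠ 0) :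
    hmul (-(hdiv (hmul (hconj Fv) dG - hmul dF (hconj Gv))
        (hmul Fv (hconj Gv) - hmul (hconj Fv) Gv))) Fv
      + hmul (hdiv (hmul Fv dG - hmul dF Gv)
        (hmul Fv (hconj Gv) - hmul (hconj Fv) Gv)) (hconj Fv) = dF := by
  set d : Hyp := hmul Fv (hconj Gv) - hmul (hconj Fv) Gv with hdd
  have hd : IsInv d := isInv_pairDenom hne
  unfold hdiv
  have key : hmul (-(hmul (hmul (hconj Fv) dG - hmul dF (hconj Gv)) (hinv d))) Fv
      + hmul (hmul (hmul Fv dG - hmul dF Gv) (hinv d)) (hconj Fv)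
      = hmul dF (hmul d (hinv d)) := by
    have expand : hmul (-(hmul (hmul (hconj Fv) dG - hmul dF (hconj Gv)) (hinv d))) Fv
        + hmul (hmul (hmul Fv dG - hmul dF Gv) (hinv d)) (hconj Fv)
        = hmul (hmul (-(hmul (hconj Fv) dG - hmul dF (hconj Gv)))
            Fv + hmul (hmul Fv dG - hmul dF Gv) (hconj Fv)) (hinv d) := by
      rw [Prod.ext_iff]
      constructor <;>
        (simp only [hmul, hconj, hinv, Prod.fst_add, Prod.snd_add, Prod.fst_sub,
          Prod.snd_sub, Prod.fst_neg, Prod.snd_neg]; ring)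
    rw [expand]
    have poly : hmul (-(hmul (hconj Fv) dG - hmul dF (hconj Gv))) Fv
        + hmul (hmul Fv dG - hmul dF Gv) (hconj Fv) = hmul dF d := by
      rw [hdd, Prod.ext_iff]
      constructor <;>
        (simp only [hmul, hconj, Prod.fst_add, Prod.snd_add, Prod.fst_sub,
          Prod.snd_sub, Prod.fst_neg, Prod.snd_neg]; ring)
    rw [poly, hmul_assoc]
  rw [key, hmul_hinv_self hd, hmul_one']

/-- Cramer identity for the second member of the pair. -/
lemma cramer2 (Fv Gv dF dG : Hyp) (hne : him (hmul (hconj Fv) Gv) ≠ 0) :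
    hmul (-(hdiv (hmul (hconj Fv) dG - hmul dF (hconj Gv))
        (hmul Fv (hconj Gv) - hmul (hconj Fv) Gv))) Gv
      + hmul (hdiv (hmul Fv dG - hmul dF Gv)
        (hmul Fv (hconj Gv) - hmul (hconj Fv) Gv)) (hconj Gv) = dG := by
  set d : Hyp := hmul Fv (hconj Gv) - hmul (hconj Fv) Gv with hdd
  have hd : IsInv d := isInv_pairDenom hne
  unfold hdiv
  have key : hmul (-(hmul (hmul (hconj Fv) dG - hmul dF (hconj Gv)) (hinv d))) Gv
      + hmul (hmul (hmul Fv dG - hmul dF Gv) (hinv d)) (hconj Gv)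
      = hmul dG (hmul d (hinv d)) := by
    have expand : hmul (-(hmul (hmul (hconj Fv) dG - hmul dF (hconj Gv)) (hinv d))) Gv
        + hmul (hmul (hmul Fv dG - hmul dF Gv) (hinv d)) (hconj Gv)
        = hmul (hmul (-(hmul (hconj Fv) dG - hmul dF (hconj Gv)))
            Gv + hmul (hmul Fv dG - hmul dF Gv) (hconj Gv)) (hinv d) := by
      rw [Prod.ext_iff]
      constructor <;>
        (simp only [hmul, hconj, hinv, Prod.fst_add, Prod.snd_add, Prod.fst_sub,
          Prod.snd_sub, Prod.fst_neg, Prod.snd_neg]; ring)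
    rw [expand]
    have poly : hmul (-(hmul (hconj Fv) dG - hmul dF (hconj Gv))) Gv
        + hmul (hmul Fv dG - hmul dF Gv) (hconj Gv) = hmul dG d := by
      rw [hdd, Prod.ext_iff]
      constructor <;>
        (simp only [hmul, hconj, Prod.fst_add, Prod.snd_add, Prod.fst_sub,
          Prod.snd_sub, Prod.fst_neg, Prod.snd_neg]; ring)
    rw [poly, hmul_assoc]
  rw [key, hmul_hinv_self hd, hmul_one']

end Infra5
section KeyAlg

lemma key_alg (av bv Av Bv za zb zA zB Fv Gv wv Pv : Hyp)
    (hd : IsInv (hmul Fv (hconj Gv) - hmul (hconj Fv) Gv))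
    (hF : hmul zA Fv + hmul Av (hmul av Fv + hmul bv (hconj Fv))
        + (hmul zB (hconj Fv) + hmul Bv (hconj (hmul Av Fv + hmul Bv (hconj Fv))))
      = hmul za Fv + hmul av (hmul Av Fv + hmul Bv (hconj Fv))
        + (hmul zb (hconj Fv) + hmul bv (hconj (hmul av Fv + hmul bv (hconj Fv)))))
    (hG : hmul zA Gv + hmul Av (hmul av Gv + hmul bv (hconj Gv))
        + (hmul zB (hconj Gv) + hmul Bv (hconj (hmul Av Gv + hmul Bv (hconj Gv))))
      = hmul za Gv + hmul av (hmul Av Gv + hmul Bv (hconj Gv))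
        + (hmul zb (hconj Gv) + hmul bv (hconj (hmul av Gv + hmul bv (hconj Gv))))) :
    hmul za wv + hmul av Pv
        + (hmul zb (hconj wv) + hmul bv (hconj (hmul av wv + hmul bv (hconj wv))))
      - (hmul zA wv + hmul Av (hmul av wv + hmul bv (hconj wv)))
      - (hmul zB (hconj wv) + hmul Bv (hconj Pv))
    = hmul av (Pv - hmul Av wv - hmul Bv (hconj wv))
      + hmul (-Bv) (hconj (Pv - hmul Av wv - hmul Bv (hconj wv))) := by
  set d : Hyp := hmul Fv (hconj Gv) - hmul (hconj Fv) Gv with hdd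
  set α : Hyp := za + hmul bv (hconj bv) - zA - hmul Bv (hconj Bv) with ha
  set β : Hyp := zb + hmul bv (hconj av) + hmul av Bv - hmul Av bv - zB
      - hmul Bv (hconj Av) with hb
  have hF1 := congrArg Prod.fst hF
  have hF2 := congrArg Prod.snd hF
  have hG1 := congrArg Prod.fst hG
  have hG2 := congrArg Prod.snd hG
  simp only [hmul, hconj, Prod.fst_add, Prod.snd_add, Prod.fst_sub, Prod.snd_sub,
    Prod.fst_neg, Prod.snd_neg] at hF1 hF2 hG1 hG2
  have sF : hmul α Fv + hmul β (hconj Fv) = 0 := by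
    rw [ha, hb, Prod.ext_iff]
    constructor <;>
      simp only [hmul, hconj, Prod.fst_add, Prod.snd_add, Prod.fst_sub, Prod.snd_sub,
        Prod.fst_neg, Prod.snd_neg, Prod.fst_zero, Prod.snd_zero]
    · linear_combination -hF1
    · linear_combination -hF2
  have sG : hmul α Gv + hmul β (hconj Gv) = 0 := by
    rw [ha, hb, Prod.ext_iff]
    constructor <;>
      simp only [hmul, hconj, Prod.fst_add, Prod.snd_add, Prod.fst_sub, Prod.snd_sub,
        Prod.fst_neg, Prod.snd_neg, Prod.fst_zero, Prod.snd_zero]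
    · linear_combination -hG1
    · linear_combination -hG2
  have hαd : hmul α d = 0 := by
    have exp : hmul α d = hmul (hmul α Fv + hmul β (hconj Fv)) (hconj Gv)
        - hmul (hmul α Gv + hmul β (hconj Gv)) (hconj Fv) := by
      rw [hdd, Prod.ext_iff]
      constructor <;>
        (simp only [hmul, hconj, Prod.fst_add, Prod.snd_add, Prod.fst_sub, Prod.snd_sub,
          Prod.fst_neg, Prod.snd_neg]; ring)
    rw [exp, sF, sG]
    simp [hmul]
  have hβd : hmul β d = 0 := by
    have exp : hmul β d = hmul Fv (hmul α Gv + hmul β (hconj Gv))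
        - hmul Gv (hmul α Fv + hmul β (hconj Fv)) := by
      rw [hdd, Prod.ext_iff]
      constructor <;>
        (simp only [hmul, hconj, Prod.fst_add, Prod.snd_add, Prod.fst_sub, Prod.snd_sub,
          Prod.fst_neg, Prod.snd_neg]; ring)
    rw [exp, sF, sG]
    simp [hmul]
  have hα : α = 0 := eq_zero_of_hmul_eq_zero hd hαd
  have hβ : β = 0 := eq_zero_of_hmul_eq_zero hd hβd
  have expand : hmul za wv + hmul av Pv
        + (hmul zb (hconj wv) + hmul bv (hconj (hmul av wv + hmul bv (hconj wv))))
      - (hmul zA wv + hmul Av (hmul av wv + hmul bv (hconj wv)))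
      - (hmul zB (hconj wv) + hmul Bv (hconj Pv))
      - (hmul av (Pv - hmul Av wv - hmul Bv (hconj wv))
        + hmul (-Bv) (hconj (Pv - hmul Av wv - hmul Bv (hconj wv))))
      = hmul α wv + hmul β (hconj wv) := by
    rw [ha, hb, Prod.ext_iff]
    constructor <;>
      (simp only [hmul, hconj, Prod.fst_add, Prod.snd_add, Prod.fst_sub, Prod.snd_sub,
        Prod.fst_neg, Prod.snd_neg]; ring)
  have z0 : hmul α wv + hmul β (hconj wv) = 0 := by
    rw [hα, hβ]; simp [hmul]
  exact sub_eq_zero.mp (expand.trans z0)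

end KeyAlg

/-- if `(F₁,G₁)` is a successor of `(F,G)` and `w ∈ C¹(Ω)` is hyperbolic
`(F,G)`-pseudoanalytic with `(F,G)`-derivative `W = w_z − A_(F,G)w − B_(F,G)w̄ ∈ C¹(Ω)`,
then `W` is hyperbolic `(F₁,G₁)`-pseudoanalytic. -/
theorem FG_derivative_pseudoanalytic_successor (Ω : Set Hyp) (hΩ : IsOpen Ω)
    (F G F₁ G₁ : Hyp → Hyp)
    (hFG : IsGenPair F G Ω) (hFG₁ : IsGenPair F₁ G₁ Ω)
    (hsucc_a : ∀ z ∈ Ω, aFG F₁ G₁ z = aFG F G z)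
    (hsucc_b : ∀ z ∈ Ω, bFG F₁ G₁ z = - BFG F G z)
    (w : Hyp → Hyp) (hw : ContDiffOn ℝ 1 w Ω)
    (hVekua : ∀ z ∈ Ω, dzbar w z = hmul (aFG F G z) (w z) + hmul (bFG F G z) (hconj (w z)))
    (W : Hyp → Hyp)
    (hWdef : ∀ z, W z = dz w z - hmul (AFG F G z) (w z) - hmul (BFG F G z) (hconj (w z)))
    (hW : ContDiffOn ℝ 1 W Ω) :
    ∀ z ∈ Ω, dzbar W z = hmul (aFG F₁ G₁ z) (W z) + hmul (bFG F₁ G₁ z) (hconj (W z)) := by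
  obtain ⟨hF2, hG2, hFGne⟩ := hFG
  intro z hz
  have hmem : Ω ∈ nhds z := hΩ.mem_nhds hz
  -- first-order differentiability
  have hFd : ∀ q ∈ Ω, DifferentiableAt ℝ F q := fun q hq =>
    (hF2.contDiffAt (hΩ.mem_nhds hq)).differentiableAt two_ne_zero
  have hGd : ∀ q ∈ Ω, DifferentiableAt ℝ G q := fun q hq =>
    (hG2.contDiffAt (hΩ.mem_nhds hq)).differentiableAt two_ne_zero
  have hwd : ∀ q ∈ Ω, DifferentiableAt ℝ w q := fun q hq =>
    (hw.contDiffAt (hΩ.mem_nhds hq)).differentiableAt one_ne_zero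
  have hwdz : DifferentiableAt ℝ w z := hwd z hz
  have hWd : DifferentiableAt ℝ W z := (hW.contDiffAt hmem).differentiableAt one_ne_zero
  have hFdz := hFd z hz
  have hGdz := hGd z hz
  -- differentiability of derived functions at z
  have hdbF : DifferentiableAt ℝ (dzbar F) z := diffAt_dzbar hΩ hz hF2
  have hdzF : DifferentiableAt ℝ (dz F) z := diffAt_dz hΩ hz hF2
  have hdbG : DifferentiableAt ℝ (dzbar G) z := diffAt_dzbar hΩ hz hG2
  have hdzG : DifferentiableAt ℝ (dz G) z := diffAt_dz hΩ hz hG2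
  have hden_d : DifferentiableAt ℝ (fun q => pairDenom F G q) z := by
    unfold pairDenom
    exact (diffAt_hmul hFdz (diffAt_hconj hGdz)).sub
      (diffAt_hmul (diffAt_hconj hFdz) hGdz)
  have hIsInvz : IsInv (pairDenom F G z) := by
    unfold pairDenom
    exact isInv_pairDenom (hFGne z hz)
  have hinv_d : DifferentiableAt ℝ (fun q => hinv (pairDenom F G q)) z :=
    diffAt_hinv hden_d hIsInvz
  have ha_d : DifferentiableAt ℝ (aFG F G) z := by
    unfold aFG hdiv
    exact (diffAt_hmul ((diffAt_hmul (diffAt_hconj hFdz) hdbG).sub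
      (diffAt_hmul hdbF (diffAt_hconj hGdz))) hinv_d).neg
  have hb_d : DifferentiableAt ℝ (bFG F G) z := by
    unfold bFG hdiv
    exact diffAt_hmul ((diffAt_hmul hFdz hdbG).sub (diffAt_hmul hdbF hGdz)) hinv_d
  have hA_d : DifferentiableAt ℝ (AFG F G) z := by
    unfold AFG hdiv
    exact (diffAt_hmul ((diffAt_hmul (diffAt_hconj hFdz) hdzG).sub
      (diffAt_hmul hdzF (diffAt_hconj hGdz))) hinv_d).neg
  have hB_d : DifferentiableAt ℝ (BFG F G) z := by
    unfold BFG hdiv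
    exact diffAt_hmul ((diffAt_hmul hFdz hdzG).sub (diffAt_hmul hdzF hGdz)) hinv_d
  -- Cramer identities on Ω
  have CrBarF : ∀ q ∈ Ω, dzbar F q
      = hmul (aFG F G q) (F q) + hmul (bFG F G q) (hconj (F q)) := by
    intro q hq
    simp only [aFG, bFG, pairDenom]
    exact (cramer1 (F q) (G q) (dzbar F q) (dzbar G q) (hFGne q hq)).symm
  have CrBarG : ∀ q ∈ Ω, dzbar G q
      = hmul (aFG F G q) (G q) + hmul (bFG F G q) (hconj (G q)) := by
    intro q hq
    simp only [aFG, bFG, pairDenom]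
    exact (cramer2 (F q) (G q) (dzbar F q) (dzbar G q) (hFGne q hq)).symm
  have CrzF : ∀ q ∈ Ω, dz F q
      = hmul (AFG F G q) (F q) + hmul (BFG F G q) (hconj (F q)) := by
    intro q hq
    simp only [AFG, BFG, pairDenom]
    exact (cramer1 (F q) (G q) (dz F q) (dz G q) (hFGne q hq)).symm
  have CrzG : ∀ q ∈ Ω, dz G q
      = hmul (AFG F G q) (G q) + hmul (BFG F G q) (hconj (G q)) := by
    intro q hq
    simp only [AFG, BFG, pairDenom]
    exact (cramer2 (F q) (G q) (dz F q) (dz G q) (hFGne q hq)).symm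
  -- Schwarz symmetry for F and G
  have commF : dzbar (dz F) z = dz (dzbar F) z :=
    dzbar_dz_comm hΩ hz hFd
      (pdx_diffAt hΩ hz (contDiffOn_fst2 hF2)) (pdt_diffAt hΩ hz (contDiffOn_fst2 hF2))
      (pdx_diffAt hΩ hz (contDiffOn_snd2 hF2)) (pdt_diffAt hΩ hz (contDiffOn_snd2 hF2))
  have commG : dzbar (dz G) z = dz (dzbar G) z :=
    dzbar_dz_comm hΩ hz hGd
      (pdx_diffAt hΩ hz (contDiffOn_fst2 hG2)) (pdt_diffAt hΩ hz (contDiffOn_fst2 hG2))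
      (pdx_diffAt hΩ hz (contDiffOn_snd2 hG2)) (pdt_diffAt hΩ hz (contDiffOn_snd2 hG2))
  -- derivative equations for F
  have evzF : dz F =ᶠ[nhds z]
      (fun q => hmul (AFG F G q) (F q) + hmul (BFG F G q) (hconj (F q))) := by
    filter_upwards [hmem] with q hq; exact CrzF q hq
  have evbF : dzbar F =ᶠ[nhds z]
      (fun q => hmul (aFG F G q) (F q) + hmul (bFG F G q) (hconj (F q))) := by
    filter_upwards [hmem] with q hq; exact CrBarF q hq
  have EF : dzbar (dz F) z
      = hmul (dzbar (AFG F G) z) (F z) + hmul (AFG F G z) (dzbar F z)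
        + (hmul (dzbar (BFG F G) z) (hconj (F z)) + hmul (BFG F G z) (hconj (dz F z))) := by
    rw [dzbar_congr evzF,
      dzbar_add (diffAt_hmul hA_d hFdz) (diffAt_hmul hB_d (diffAt_hconj hFdz)),
      dzbar_hmul hA_d hFdz, dzbar_hmul hB_d (diffAt_hconj hFdz), dzbar_hconj]
  have EbF : dz (dzbar F) z
      = hmul (dz (aFG F G) z) (F z) + hmul (aFG F G z) (dz F z)
        + (hmul (dz (bFG F G) z) (hconj (F z)) + hmul (bFG F G z) (hconj (dzbar F z))) := by
    rw [dz_congr evbF,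
      dz_add (diffAt_hmul ha_d hFdz) (diffAt_hmul hb_d (diffAt_hconj hFdz)),
      dz_hmul ha_d hFdz, dz_hmul hb_d (diffAt_hconj hFdz), dz_hconj]
  have hFeq := EF.symm.trans (commF.trans EbF)
  rw [CrBarF z hz, CrzF z hz] at hFeq
  -- derivative equations for G
  have evzG : dz G =ᶠ[nhds z]
      (fun q => hmul (AFG F G q) (G q) + hmul (BFG F G q) (hconj (G q))) := by
    filter_upwards [hmem] with q hq; exact CrzG q hq
  have evbG : dzbar G =ᶠ[nhds z]
      (fun q => hmul (aFG F G q) (G q) + hmul (bFG F G q) (hconj (G q))) := by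
    filter_upwards [hmem] with q hq; exact CrBarG q hq
  have EG : dzbar (dz G) z
      = hmul (dzbar (AFG F G) z) (G z) + hmul (AFG F G z) (dzbar G z)
        + (hmul (dzbar (BFG F G) z) (hconj (G z)) + hmul (BFG F G z) (hconj (dz G z))) := by
    rw [dzbar_congr evzG,
      dzbar_add (diffAt_hmul hA_d hGdz) (diffAt_hmul hB_d (diffAt_hconj hGdz)),
      dzbar_hmul hA_d hGdz, dzbar_hmul hB_d (diffAt_hconj hGdz), dzbar_hconj]
  have EbG : dz (dzbar G) z
      = hmul (dz (aFG F G) z) (G z) + hmul (aFG F G z) (dz G z)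
        + (hmul (dz (bFG F G) z) (hconj (G z)) + hmul (bFG F G z) (hconj (dzbar G z))) := by
    rw [dz_congr evbG,
      dz_add (diffAt_hmul ha_d hGdz) (diffAt_hmul hb_d (diffAt_hconj hGdz)),
      dz_hmul ha_d hGdz, dz_hmul hb_d (diffAt_hconj hGdz), dz_hconj]
  have hGeq := EG.symm.trans (commG.trans EbG)
  rw [CrBarG z hz, CrzG z hz] at hGeq
  -- the function w
  have Weq : W = fun q => dz w q - hmul (AFG F G q) (w q)
      - hmul (BFG F G q) (hconj (w q)) := funext hWdef
  have dzw_eq : dz w = fun q => W q + hmul (AFG F G q) (w q)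
      + hmul (BFG F G q) (hconj (w q)) := by
    funext q
    rw [hWdef q]
    abel
  have hdzw_d : DifferentiableAt ℝ (dz w) z := by
    rw [dzw_eq]
    exact (hWd.add (diffAt_hmul hA_d hwdz)).add (diffAt_hmul hB_d (diffAt_hconj hwdz))
  have hVek_ev : dzbar w =ᶠ[nhds z]
      (fun q => hmul (aFG F G q) (w q) + hmul (bFG F G q) (hconj (w q))) := by
    filter_upwards [hmem] with q hq; exact hVekua q hq
  have hdbw_d : DifferentiableAt ℝ (dzbar w) z :=
    hVek_ev.differentiableAt_iff.mpr
      ((diffAt_hmul ha_d hwdz).add (diffAt_hmul hb_d (diffAt_hconj hwdz)))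
  -- mixed partials of w
  have ew1 : pdx (fun q => (w q).1) = fun q => (dz w q).1 + (dzbar w q).1 := by
    funext q; simp only [dz, dzbar]; ring
  have ew2 : pdt (fun q => (w q).1) = fun q => (dz w q).2 - (dzbar w q).2 := by
    funext q; simp only [dz, dzbar]; ring
  have ew3 : pdx (fun q => (w q).2) = fun q => (dz w q).2 + (dzbar w q).2 := by
    funext q; simp only [dz, dzbar]; ring
  have ew4 : pdt (fun q => (w q).2) = fun q => (dz w q).1 - (dzbar w q).1 := by
    funext q; simp only [dz, dzbar]; ring
  have commw : dzbar (dz w) z = dz (dzbar w) z := by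
    refine dzbar_dz_comm hΩ hz hwd ?_ ?_ ?_ ?_
    · rw [ew1]; exact hdzw_d.fst.add hdbw_d.fst
    · rw [ew2]; exact hdzw_d.snd.sub hdbw_d.snd
    · rw [ew3]; exact hdzw_d.snd.add hdbw_d.snd
    · rw [ew4]; exact hdzw_d.fst.sub hdbw_d.fst
  -- compute dzbar W z
  have e1 : dzbar W z = dzbar (dz w) z - dzbar (fun q => hmul (AFG F G q) (w q)) z
      - dzbar (fun q => hmul (BFG F G q) (hconj (w q))) z := by
    conv_lhs => rw [Weq]
    rw [dzbar_sub (hdzw_d.fun_sub (diffAt_hmul hA_d hwdz))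
        (diffAt_hmul hB_d (diffAt_hconj hwdz)),
      dzbar_sub hdzw_d (diffAt_hmul hA_d hwdz)]
  have e3 : dz (dzbar w) z
      = hmul (dz (aFG F G) z) (w z) + hmul (aFG F G z) (dz w z)
        + (hmul (dz (bFG F G) z) (hconj (w z)) + hmul (bFG F G z) (hconj (dzbar w z))) := by
    rw [dz_congr hVek_ev,
      dz_add (diffAt_hmul ha_d hwdz) (diffAt_hmul hb_d (diffAt_hconj hwdz)),
      dz_hmul ha_d hwdz, dz_hmul hb_d (diffAt_hconj hwdz), dz_hconj]
  have e4 : dzbar (fun q => hmul (AFG F G q) (w q)) z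
      = hmul (dzbar (AFG F G) z) (w z) + hmul (AFG F G z) (dzbar w z) :=
    dzbar_hmul hA_d hwdz
  have e5 : dzbar (fun q => hmul (BFG F G q) (hconj (w q))) z
      = hmul (dzbar (BFG F G) z) (hconj (w z)) + hmul (BFG F G z) (hconj (dz w z)) := by
    rw [dzbar_hmul hB_d (diffAt_hconj hwdz), dzbar_hconj]
  rw [hsucc_a z hz, hsucc_b z hz, e1, commw, e3, e4, e5, hVekua z hz, hWdef z]
  exact key_alg (aFG F G z) (bFG F G z) (AFG F G z) (BFG F G z)
    (dz (aFG F G) z) (dz (bFG F G) z) (dzbar (AFG F G) z) (dzbar (BFG F G) z)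
    (F z) (G z) (w z) (dz w z) (isInv_pairDenom (hFGne z hz)) hFeq hGeq
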